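/- For all complex z with Re(z) < 0 (avoiding the cuts along ±iy, y ≥ 1), the function ξ̄(z) = (1/2)z(z²+1)^{1/2} + (1/2)log(z + (z²+1)^{1/2}) satisfies ξ̄(z) = -(1/2)z² - (1/2)log(-2z) - 1/4 + O(z^{-2}) as z → ∞ with Re(z) < 0. -/

import Mathlib

open Complex Filter Asymptotics

lemma sqrt_im_arg (A : ℂ) : (Complex.log A * ((1:ℂ)/2)).im = A.arg / 2 := by
  simp [Complex.mul_im, Complex.log_im]
  ring

lemma sqrt_re_nonneg (A : ℂ) : 0 ≤ (A ^ ((1:ℂ)/2)).re := by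
  rcases eq_or_ne A 0 with h | h
  · simp [h, Complex.zero_cpow (by norm_num : (1:ℂ)/2 ≠ 0)]
  rw [Complex.cpow_def_of_ne_zero h, Complex.exp_re, sqrt_im_arg]
  have h2 := Complex.arg_le_pi A
  have h3 := Complex.neg_pi_lt_arg A
  have hpi := Real.pi_pos
  have hc : 0 ≤ Real.cos (A.arg / 2) :=
    Real.cos_nonneg_of_mem_Icc ⟨by linarith, by linarith⟩
  positivity

lemma sqrt_re_pos {A : ℂ} (h : 0 < A.re) : 0 < (A ^ ((1:ℂ)/2)).re := by
  have hA : A ≠ 0 := by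
    intro h0; rw [h0] at h; simp at h
  rw [Complex.cpow_def_of_ne_zero hA, Complex.exp_re, sqrt_im_arg]
  have h2 : |A.arg| < Real.pi / 2 := Complex.abs_arg_lt_pi_div_two_iff.mpr (Or.inl h)
  rw [abs_lt] at h2
  have hpi := Real.pi_pos
  have hc : 0 < Real.cos (A.arg / 2) :=
    Real.cos_pos_of_mem_Ioo ⟨by linarith [h2.1], by linarith [h2.2]⟩
  positivity

set_option maxHeartbeats 1000000 in
lemma key (z : ℂ) (hz : 2 ≤ ‖z‖) (hre : z.re < 0) :
    ‖(z * (z ^ 2 + 1) ^ ((1 : ℂ) / 2) / 2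
        + Complex.log (z + (z ^ 2 + 1) ^ ((1 : ℂ) / 2)) / 2)
      - (-(z ^ 2) / 2 - Complex.log (-2 * z) / 2 - 1 / 4)‖
    ≤ 2 * ‖(z ^ 2)⁻¹‖ := by
  have hz0 : z ≠ 0 := by
    intro h; rw [h] at hz; simp at hz; linarith
  have hz20 : z ^ 2 ≠ 0 := pow_ne_zero _ hz0
  set w : ℂ := (z ^ 2)⁻¹ with hw_def
  have hzw : z ^ 2 * w = 1 := mul_inv_cancel₀ hz20
  have habsz2 : (4:ℝ) ≤ ‖z ^ 2‖ := by
    rw [norm_pow]; nlinarith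
  have hw4 : ‖w‖ ≤ 1/4 := by
    rw [hw_def, norm_inv]
    rw [inv_le_comm₀ (by linarith) (by norm_num)]
    linarith
  -- v = sqrt(1+w)
  set v : ℂ := (1 + w) ^ ((1:ℂ)/2) with hv_def
  have h1w : (1 + w) ≠ 0 := by
    intro h
    have : ‖w‖ = 1 := by
      have : w = -1 := by linear_combination h
      simp [this]
    linarith
  have hv2 : v ^ 2 = 1 + w := by
    have := Complex.cpow_nat_inv_pow (1 + w) (two_ne_zero)
    rw [hv_def, show ((1:ℂ)/2) = (((2:ℕ)):ℂ)⁻¹ by norm_num]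
    exact_mod_cast this
  have h1wre : (0:ℝ) < (1 + w).re := by
    have := Complex.abs_re_le_norm w
    have : |w.re| ≤ 1/4 := le_trans this hw4
    rw [abs_le] at this
    simp only [Complex.add_re, Complex.one_re]
    linarith [this.1]
  have hvre : 0 < v.re := sqrt_re_pos h1wre
  have hvp1 : (1:ℝ) ≤ ‖v + 1‖ := by
    have h1 : v.re + 1 ≤ (v + 1).re := by simp
    have h2 := Complex.re_le_norm (v + 1)
    simp only [Complex.add_re, Complex.one_re] at h2 ⊢
    linarith
  have hvp1ne : v + 1 ≠ 0 := by
    intro h; rw [h] at hvp1; simp at hvp1; linarith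
  have hvm1 : (v - 1) * (v + 1) = w := by linear_combination hv2
  have hv1 : ‖v - 1‖ ≤ ‖w‖ := by
    have : ‖v - 1‖ * ‖v + 1‖ = ‖w‖ := by
      rw [← norm_mul]; exact congrArg _ hvm1
    nlinarith [norm_nonneg (v - 1), norm_nonneg (v + 1)]
  have hv3 : ‖v - 1 - w/2‖ ≤ (‖w‖)^2 / 2 := by
    have hid : v - 1 - w/2 = w * (1 - v) / (2 * (v + 1)) := by
      field_simp
      linear_combination (2 : ℂ) * hv2
    rw [hid, norm_div, norm_mul, norm_mul]
    have h1 : ‖1 - v‖ = ‖v - 1‖ := by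
      exact norm_sub_rev 1 v
    rw [h1]
    have hden : (2:ℝ) ≤ ‖(2:ℂ)‖ * ‖v + 1‖ := by
      simp only [Complex.norm_two]; nlinarith
    rw [div_le_iff₀ (by nlinarith)]
    nlinarith [norm_nonneg (v - 1), norm_nonneg w]
  -- the branch identity s = -z * v
  have hz21 : z ^ 2 + 1 ≠ 0 := by
    intro h
    have : ‖z^2‖ = 1 := by
      have : z^2 = -1 := by linear_combination h
      simp [this]
    linarith
  have hs2 : ((z ^ 2 + 1) ^ ((1:ℂ)/2)) ^ 2 = z ^ 2 + 1 := by
    have := Complex.cpow_nat_inv_pow (z ^ 2 + 1) (two_ne_zero)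
    rw [show ((1:ℂ)/2) = (((2:ℕ)):ℂ)⁻¹ by norm_num]
    exact_mod_cast this
  -- Im v in terms of Im w, positivity of Re(-z*v)
  have hvim : 2 * v.re * v.im = w.im := by
    have := congrArg Complex.im hv2
    simp only [Complex.add_im, Complex.one_im, zero_add] at this
    rw [pow_two, Complex.mul_im] at this
    linarith
  have hnz : (0:ℝ) < Complex.normSq z := Complex.normSq_pos.mpr hz0
  have hwim : w.im = 2 * (-z.re) * z.im / (Complex.normSq z) ^ 2 := by
    have him2 : (z ^ 2).im = 2 * z.re * z.im := by
      rw [pow_two, Complex.mul_im]; ring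
    rw [hw_def, Complex.inv_im, him2, map_pow]
    ring
  have hbre : 0 < (-z * v).re := by
    have h1 : (-z * v).re = -z.re * v.re + z.im * v.im := by
      simp [Complex.mul_re]; ring
    rw [h1]
    have h6 : 0 ≤ z.im * w.im := by
      rw [hwim]
      have he : z.im * (2 * (-z.re) * z.im / Complex.normSq z ^ 2)
          = 2 * (-z.re) * z.im ^ 2 / (Complex.normSq z) ^ 2 := by ring
      rw [he]
      apply div_nonneg (by nlinarith) (by positivity)
    have h7 : z.im * v.im * (2 * v.re) = z.im * w.im := by
      linear_combination z.im * hvim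
    have h2 : 0 ≤ z.im * v.im := by nlinarith [h6, hvre, h7]
    nlinarith
  have hs : (z ^ 2 + 1) ^ ((1:ℂ)/2) = -z * v := by
    set s := (z ^ 2 + 1) ^ ((1:ℂ)/2) with hs_def
    have hb2 : (-z * v) ^ 2 = z ^ 2 + 1 := by
      have : (-z * v) ^ 2 = z ^ 2 * v ^ 2 := by ring
      rw [this, hv2]; linear_combination hzw
    have hfac : (s - (-z * v)) * (s + (-z * v)) = 0 := by
      have : s ^ 2 - (-z * v) ^ 2 = 0 := by rw [hs2, hb2]; ring
      linear_combination this
    rcases mul_eq_zero.mp hfac with h | h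
    · linear_combination h
    · exfalso
      have hsre : 0 ≤ s.re := sqrt_re_nonneg _
      have : s = -(-z * v) := by linear_combination h
      have : s.re = -(-z * v).re := by rw [this]; simp
      linarith
  -- the log identity
  set u : ℂ := (v + 1) / 2 with hu_def
  have hure : 0 < u.re := by
    have h1 : u = ((1/2 : ℝ) : ℂ) * (v + 1) := by
      rw [hu_def]; push_cast; ring
    rw [h1, Complex.re_ofReal_mul]
    simp only [Complex.add_re, Complex.one_re]
    linarith
  have hu0 : u ≠ 0 := by
    intro h; rw [h] at hure; simp at hure
  have hm2z0 : (-2 : ℂ) * z ≠ 0 := by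
    intro h
    rcases mul_eq_zero.mp h with h | h
    · norm_num at h
    · exact hz0 h
  have hm2zre : 0 < ((-2 : ℂ) * z).re := by
    have : ((-2 : ℂ) * z).re = -2 * z.re := by
      simp [Complex.mul_re]
    rw [this]; linarith
  have hprod : ((-2 : ℂ) * z) * u = -z * v + -z := by
    rw [hu_def]; ring
  have hprodre : 0 < (((-2 : ℂ) * z) * u).re := by
    rw [hprod]
    simp only [Complex.add_re, Complex.neg_re]
    have := hbre; linarith
  have hprod0 : ((-2 : ℂ) * z) * u ≠ 0 := mul_ne_zero hm2z0 hu0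
  have hzs : z + (z ^ 2 + 1) ^ ((1:ℂ)/2) = (((-2 : ℂ) * z) * u)⁻¹ := by
    rw [hs]
    have hmul : (z + -z * v) * (((-2 : ℂ) * z) * u) = 1 := by
      rw [hu_def]
      linear_combination (z^2 : ℂ) * hv2 + hzw
    exact eq_inv_of_mul_eq_one_left hmul
  have harg2z : |((-2 : ℂ) * z).arg| < Real.pi / 2 :=
    Complex.abs_arg_lt_pi_div_two_iff.mpr (Or.inl hm2zre)
  have hargu : |u.arg| < Real.pi / 2 :=
    Complex.abs_arg_lt_pi_div_two_iff.mpr (Or.inl hure)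
  have hpi := Real.pi_pos
  have hlog1 : Complex.log ((((-2 : ℂ) * z) * u)⁻¹)
      = -(Complex.log ((-2 : ℂ) * z) + Complex.log u) := by
    have hargne : (((-2 : ℂ) * z) * u).arg ≠ Real.pi := by
      intro h
      rw [Complex.arg_eq_pi_iff] at h
      linarith [hprodre, h.1]
    have hmem : ((-2 : ℂ) * z).arg + u.arg ∈ Set.Ioc (-Real.pi) Real.pi := by
      rw [abs_lt] at harg2z hargu
      rw [Set.mem_Ioc]
      constructor
      · linarith [harg2z.1, hargu.1]
      · linarith [harg2z.2, hargu.2]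
    rw [Complex.log_inv _ hargne, Complex.log_mul hm2z0 hu0 hmem]
  have hfin : (z * (z ^ 2 + 1) ^ ((1 : ℂ) / 2) / 2
        + Complex.log (z + (z ^ 2 + 1) ^ ((1 : ℂ) / 2)) / 2)
      - (-(z ^ 2) / 2 - Complex.log (-2 * z) / 2 - 1 / 4)
      = -(z ^ 2 / 2) * (v - 1 - w / 2) - Complex.log u / 2 := by
    rw [hzs, hlog1, hs]
    linear_combination (-(1:ℂ)/4) * hzw
  rw [hfin]
  have habsww : ‖z ^ 2‖ * ‖w‖ = 1 := by
    rw [← norm_mul]; rw [hzw]; simp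
  have ht : ‖(v - 1) / 2‖ ≤ 1 / 2 := by
    rw [norm_div]
    simp only [Complex.norm_two]
    nlinarith
  have hlogu : ‖Complex.log u‖ ≤ 3 / 2 * ‖(v - 1) / 2‖ := by
    have h1 : u = 1 + (v - 1) / 2 := by rw [hu_def]; ring
    rw [h1]
    exact Complex.norm_log_one_add_half_le_self ht
  have hb1 : ‖-(z ^ 2 / 2) * (v - 1 - w / 2)‖ ≤ ‖w‖ / 4 := by
    rw [norm_mul, norm_neg, norm_div]
    simp only [Complex.norm_two]
    have step : ‖z ^ 2‖ * ‖v - 1 - w / 2‖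
        ≤ ‖w‖ / 2 := by
      calc ‖z ^ 2‖ * ‖v - 1 - w / 2‖
          ≤ ‖z ^ 2‖ * (‖w‖ ^ 2 / 2) :=
            mul_le_mul_of_nonneg_left hv3 (norm_nonneg _)
        _ = ‖z ^ 2‖ * ‖w‖ * ‖w‖ / 2 := by ring
        _ = ‖w‖ / 2 := by rw [habsww]; ring
    calc ‖z ^ 2‖ / 2 * ‖v - 1 - w / 2‖
        = ‖z ^ 2‖ * ‖v - 1 - w / 2‖ / 2 := by ring
      _ ≤ ‖w‖ / 2 / 2 := by linarith
      _ = ‖w‖ / 4 := by ring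
  have hb2 : ‖Complex.log u / 2‖ ≤ 3 / 8 * ‖w‖ := by
    rw [norm_div]
    have h2 : ‖(v - 1) / 2‖ ≤ ‖w‖ / 2 := by
      rw [norm_div]
      simp only [Complex.norm_two]
      linarith
    have h3 : ‖(2 : ℂ)‖ = 2 := by simp
    rw [h3]
    nlinarith [norm_nonneg (Complex.log u)]
  calc ‖-(z ^ 2 / 2) * (v - 1 - w / 2) - Complex.log u / 2‖
      ≤ ‖-(z ^ 2 / 2) * (v - 1 - w / 2)‖ + ‖Complex.log u / 2‖ := norm_sub_le _ _
    _ ≤ ‖w‖ / 4 + 3 / 8 * ‖w‖ := add_le_add hb1 hb2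
    _ ≤ 2 * ‖(z ^ 2)⁻¹‖ := by
        rw [← hw_def]
        nlinarith [norm_nonneg w]


theorem xi_bar_asymptotic_left_half_plane :
    (fun z : ℂ =>
        (z * (z ^ 2 + 1) ^ ((1 : ℂ) / 2) / 2
          + Complex.log (z + (z ^ 2 + 1) ^ ((1 : ℂ) / 2)) / 2)
        - (-(z ^ 2) / 2 - Complex.log (-2 * z) / 2 - 1 / 4))
      =O[comap (fun z : ℂ => ‖z‖) atTop ⊓
          𝓟 {z : ℂ | z.re < 0 ∧ ¬(z.re = 0 ∧ 1 ≤ |z.im|)}]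
        fun z : ℂ => (z ^ 2)⁻¹ := by
  rw [Asymptotics.isBigO_iff]
  refine ⟨2, ?_⟩
  have h1 : ∀ᶠ z : ℂ in comap (fun z : ℂ => ‖z‖) atTop, 2 ≤ ‖z‖ :=
    eventually_comap.mpr ((eventually_ge_atTop (2:ℝ)).mono fun b hb a ha => le_of_le_of_eq hb ha.symm)
  rw [eventually_inf_principal]
  filter_upwards [h1] with z hz hmem
  exact key z hz hmem.1
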